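/- arXiv:2010.03085 — 2 statements merged into one kernel-verified Lean document; each statement's English description precedes it below -/
import Mathlib

section
/- Let L, R be 2×2 complex matrices satisfying the coin condition L*L + R*R = I. If u is a unit vector in ℂ² such that |⟨u, Lu⟩|² + |⟨u, Ru⟩|² = 1, then u is a common eigenvector of L and R. -/
open Matrix

theorem stmt0 (L R : Matrix (Fin 2) (Fin 2) ℂ)
    (hcoin : Lᴴ * L + Rᴴ * R = 1)
    (u : Fin 2 → ℂ) (hu : star u ⬝ᵥ u = 1)
    (h : ‖star u ⬝ᵥ L.mulVec u‖ ^ 2 + ‖star u ⬝ᵥ R.mulVec u‖ ^ 2 = 1) :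
    (∃ a : ℂ, L.mulVec u = a • u) ∧ (∃ b : ℂ, R.mulVec u = b • u) := by
  classical
  set e := (WithLp.equiv 2 (Fin 2 → ℂ)).symm with he
  set U : EuclideanSpace ℂ (Fin 2) := e u
  set Lu : EuclideanSpace ℂ (Fin 2) := e (L.mulVec u)
  set Ru : EuclideanSpace ℂ (Fin 2) := e (R.mulVec u)
  have hinner : ∀ x y : Fin 2 → ℂ, (inner ℂ (e x) (e y) : ℂ) = star x ⬝ᵥ y := fun x y => by
    rw [EuclideanSpace.inner_eq_star_dotProduct, dotProduct_comm]; rfl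
  -- norms
  have hUnorm : ‖U‖ = 1 := by
    have h1 : (inner ℂ U U : ℂ) = 1 := by rw [hinner]; exact hu
    have h3 : (‖U‖ : ℝ) ^ 2 = 1 := by
      rw [norm_sq_eq_re_inner (𝕜 := ℂ), h1]; simp
    nlinarith [norm_nonneg U]
  have hU0 : U ≠ 0 := by
    intro h0; rw [h0, norm_zero] at hUnorm; norm_num at hUnorm
  -- sum of squared norms
  have hkey : star (L.mulVec u) ⬝ᵥ (L.mulVec u) + star (R.mulVec u) ⬝ᵥ (R.mulVec u)
      = 1 := by
    have hc := congrArg (fun M : Matrix (Fin 2) (Fin 2) ℂ => star u ⬝ᵥ (M.mulVec u)) hcoin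
    simp only [Matrix.add_mulVec, dotProduct_add, Matrix.one_mulVec] at hc
    have hL1 : star (L.mulVec u) ⬝ᵥ (L.mulVec u) = star u ⬝ᵥ ((Lᴴ * L).mulVec u) := by
      rw [Matrix.star_mulVec, ← Matrix.dotProduct_mulVec, Matrix.mulVec_mulVec]
    have hR1 : star (R.mulVec u) ⬝ᵥ (R.mulVec u) = star u ⬝ᵥ ((Rᴴ * R).mulVec u) := by
      rw [Matrix.star_mulVec, ← Matrix.dotProduct_mulVec, Matrix.mulVec_mulVec]
    rw [hL1, hR1, hc, hu]
  have hLnR : ‖Lu‖ ^ 2 + ‖Ru‖ ^ 2 = 1 := by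
    have e1 : (inner ℂ Lu Lu : ℂ) = star (L.mulVec u) ⬝ᵥ (L.mulVec u) := hinner _ _
    have e2 : (inner ℂ Ru Ru : ℂ) = star (R.mulVec u) ⬝ᵥ (R.mulVec u) := hinner _ _
    have : (inner ℂ Lu Lu : ℂ) + (inner ℂ Ru Ru : ℂ) = 1 := by rw [e1, e2]; exact hkey
    have hre := congrArg Complex.re this
    simp only [Complex.add_re, Complex.one_re] at hre
    rw [norm_sq_eq_re_inner (𝕜 := ℂ) Lu, norm_sq_eq_re_inner (𝕜 := ℂ) Ru]
    exact hre
  -- Cauchy–Schwarz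
  have hcs1 : ‖(inner ℂ U Lu : ℂ)‖ ≤ ‖U‖ * ‖Lu‖ := norm_inner_le_norm U Lu
  have hcs2 : ‖(inner ℂ U Ru : ℂ)‖ ≤ ‖U‖ * ‖Ru‖ := norm_inner_le_norm U Ru
  rw [hUnorm, one_mul] at hcs1 hcs2
  have hA : ‖(inner ℂ U Lu : ℂ)‖ = ‖star u ⬝ᵥ L.mulVec u‖ := by rw [hinner]
  have hB : ‖(inner ℂ U Ru : ℂ)‖ = ‖star u ⬝ᵥ R.mulVec u‖ := by rw [hinner]
  rw [← hA, ← hB] at h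
  have heq1 : ‖(inner ℂ U Lu : ℂ)‖ = ‖U‖ * ‖Lu‖ := by
    rw [hUnorm, one_mul]
    nlinarith [norm_nonneg (inner ℂ U Lu : ℂ), norm_nonneg (inner ℂ U Ru : ℂ),
      norm_nonneg Lu, norm_nonneg Ru]
  have heq2 : ‖(inner ℂ U Ru : ℂ)‖ = ‖U‖ * ‖Ru‖ := by
    rw [hUnorm, one_mul]
    nlinarith [norm_nonneg (inner ℂ U Lu : ℂ), norm_nonneg (inner ℂ U Ru : ℂ),
      norm_nonneg Lu, norm_nonneg Ru]
  have h1 := ((norm_inner_eq_norm_tfae (𝕜 := ℂ) U Lu).out 0 2).mp heq1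
  have h2 := ((norm_inner_eq_norm_tfae (𝕜 := ℂ) U Ru).out 0 2).mp heq2
  rcases h1 with h1 | ⟨a, ha⟩
  · exact absurd h1 hU0
  rcases h2 with h2 | ⟨b, hb⟩
  · exact absurd h2 hU0
  refine ⟨⟨a, ?_⟩, ⟨b, ?_⟩⟩
  · have := congrArg (WithLp.equiv 2 (Fin 2 → ℂ)) ha
    exact this
  · have := congrArg (WithLp.equiv 2 (Fin 2 → ℂ)) hb
    exact this
end

section
/- Let p ∈ [0,1]. The series ∑_{n≥0} C(2n, n) · pⁿ (1−p)ⁿ diverges (equals +∞) if and only if p = 1/2. -/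
theorem stmt2 (p : ℝ) (hp : p ∈ Set.Icc (0 : ℝ) 1) :
    ¬ Summable (fun n : ℕ => ((2 * n).choose n : ℝ) * p ^ n * (1 - p) ^ n) ↔ p = 1 / 2 := by
  obtain ⟨hp0, hp1⟩ := hp
  have hq0 : 0 ≤ 1 - p := by linarith
  have hx0 : 0 ≤ p * (1 - p) := mul_nonneg hp0 hq0
  constructor
  · -- contrapositive: p ≠ 1/2 → summable
    intro hns
    by_contra hne
    apply hns
    have hsq : 0 < (2 * p - 1) ^ 2 := by
      have : 2 * p - 1 ≠ 0 := fun h => hne (by linarith)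
      positivity
    have hlt : 4 * (p * (1 - p)) < 1 := by nlinarith
    refine Summable.of_nonneg_of_le (fun n => ?_) (fun n => ?_)
      ((summable_geometric_of_lt_one (by nlinarith) hlt))
    · exact mul_nonneg (mul_nonneg (by positivity) (by positivity)) (by positivity)
    · have hch : ((2 * n).choose n : ℝ) ≤ 4 ^ n := by
        have h1 : (2 * n).choose n ≤ (2 * n + 1).choose n :=
          Nat.choose_le_choose n (Nat.le_succ _)
        have h2 := Nat.choose_middle_le_pow n
        exact_mod_cast h1.trans h2
      calc ((2 * n).choose n : ℝ) * p ^ n * (1 - p) ^ n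
          ≤ 4 ^ n * p ^ n * (1 - p) ^ n := by
            apply mul_le_mul_of_nonneg_right (mul_le_mul_of_nonneg_right hch (by positivity)) (by positivity)
        _ = (4 * (p * (1 - p))) ^ n := by rw [mul_pow, mul_pow]; ring
  · -- p = 1/2 → not summable
    rintro rfl hs
    -- terms ≥ 1/(2n) for n ≥ 1
    have key : ∀ n : ℕ, 1 ≤ n → (1 : ℝ) / (2 * n) ≤
        ((2 * n).choose n : ℝ) * (1 / 2 : ℝ) ^ n * (1 - 1 / 2) ^ n := by
      intro n hn
      have h4 := Nat.four_pow_le_two_mul_self_mul_centralBinom n hn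
      rw [Nat.centralBinom_eq_two_mul_choose] at h4
      have h4' : (4 : ℝ) ^ n ≤ 2 * n * ((2 * n).choose n : ℝ) := by exact_mod_cast h4
      have hn0 : (0 : ℝ) < 2 * n := by positivity
      rw [div_le_iff₀ hn0]
      have : ((2 * n).choose n : ℝ) * (1 / 2) ^ n * (1 - 1 / 2) ^ n * (2 * n)
          = (2 * n * ((2 * n).choose n : ℝ)) / 4 ^ n := by
        rw [show (4:ℝ) = 2 ^ 2 by norm_num, ← pow_mul]
        field_simp
        have h12 : ((1:ℝ)/2)^n * (((2-1)/2)^n * 2^(2*n)) = 1 := by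
          rw [pow_mul, ← mul_pow, ← mul_pow]; norm_num
        linear_combination ((2 * n).choose n : ℝ) * h12
      rw [this, le_div_iff₀ (by positivity)]
      linarith
    have hs2 : Summable (fun n : ℕ => (1 : ℝ) / (2 * n)) := by
      have := (summable_nat_add_iff 1).2 hs
      refine ((summable_nat_add_iff 1).1 ?_)
      refine Summable.of_nonneg_of_le (fun n => by positivity) (fun n => ?_) this
      exact key (n + 1) (Nat.le_add_left 1 n)
    have : Summable (fun n : ℕ => (1 : ℝ) / n) := by
      have := hs2.mul_left 2
      refine this.congr fun n => ?_
      rcases Nat.eq_zero_or_pos n with rfl | hn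
      · simp
      · field_simp
    exact Real.not_summable_one_div_natCast this
end
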